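/- In flat spacetime (vanishing Riemann tensor), the scalar superenergy tensor S_{αβλμ} of a solution of the wave equation ∇_μ∇^μ φ = 0 is divergence-free: ∇^α S_{αβλμ} = 0. -/
import Mathlib


/-- The basic superenergy tensor of a (massless) scalar field,
`S_{αβλμ} = ∇_α∇_λφ ∇_μ∇_βφ + ∇_α∇_μφ ∇_β∇_λφ − g_{αβ} ∇_λ∇^ρφ ∇_μ∇_ρφ
  − g_{λμ} ∇_α∇^ρφ ∇_β∇_ρφ + (1/2) g_{αβ} g_{λμ} ∇_σ∇_ρφ ∇^σ∇^ρφ`,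
written in terms of the Hessian `H a b = ∇_a∇_b φ`, the metric `g` and its
inverse `ginv`. -/
noncomputable def Ssc {ι : Type*} [Fintype ι] (g ginv : ι → ι → ℝ)
    (H : ι → ι → ℝ) (α β l μ : ι) : ℝ :=
  H α l * H μ β + H α μ * H β l
  - g α β * (∑ ρ, ∑ ρ', ginv ρ ρ' * H l ρ * H μ ρ')
  - g l μ * (∑ ρ, ∑ ρ', ginv ρ ρ' * H α ρ * H β ρ')
  + (1/2) * g α β * g l μ *
      (∑ σ, ∑ ρ, ∑ σ', ∑ ρ', ginv σ σ' * ginv ρ ρ' * H σ ρ * H σ' ρ')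

/-- The covariant derivative `∇_n S_{αβλμ}` of the scalar superenergy tensor,
obtained by the Leibniz rule from its defining formula (`∇g = 0`);
`DH n a b = ∇_n ∇_a ∇_b φ` is the derivative of the Hessian `H`. -/
noncomputable def DSsc {ι : Type*} [Fintype ι] (g ginv : ι → ι → ℝ)
    (H : ι → ι → ℝ) (DH : ι → ι → ι → ℝ) (n α β l μ : ι) : ℝ :=
  DH n α l * H μ β + H α l * DH n μ β + DH n α μ * H β l + H α μ * DH n β l
  - g α β * (∑ ρ, ∑ ρ', ginv ρ ρ' * (DH n l ρ * H μ ρ' + H l ρ * DH n μ ρ'))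
  - g l μ * (∑ ρ, ∑ ρ', ginv ρ ρ' * (DH n α ρ * H β ρ' + H α ρ * DH n β ρ'))
  + (1/2) * g α β * g l μ * (∑ σ, ∑ ρ, ∑ σ', ∑ ρ',
      ginv σ σ' * ginv ρ ρ' * (DH n σ ρ * H σ' ρ' + H σ ρ * DH n σ' ρ'))

/-- In flat spacetime (vanishing Riemann tensor, so covariant
derivatives commute and third derivatives of `φ` are totally symmetric), the
superenergy tensor of a solution `φ` of the wave equation `∇_μ∇^μ φ = 0` is
divergence-free: `∇^α S_{αβλμ} = 0`.
Hypotheses: `H` is the (symmetric) Hessian of `φ`; `DH = ∇H` is totally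
symmetric (flatness); the wave equation and its derivative hold
(`g^{ρρ'} H_{ρρ'} = 0`, `g^{ρρ'} DH_{νρρ'} = 0`). -/
theorem scalar_superenergy_divergence_free_flat {ι : Type*} [Fintype ι] [DecidableEq ι]
    (g ginv : ι → ι → ℝ) (H : ι → ι → ℝ) (DH : ι → ι → ι → ℝ)
    (hg : ∀ a b, g a b = g b a) (hginv : ∀ a b, ginv a b = ginv b a)
    (hinv : ∀ a b, ∑ c, ginv a c * g c b = if a = b then 1 else 0)
    (hH : ∀ a b, H a b = H b a)
    (hDH1 : ∀ n a b, DH n a b = DH a n b)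
    (hDH2 : ∀ n a b, DH n a b = DH n b a)
    (hwave : ∑ ρ, ∑ ρ', ginv ρ ρ' * H ρ ρ' = 0)
    (hwaveD : ∀ n, ∑ ρ, ∑ ρ', ginv ρ ρ' * DH n ρ ρ' = 0) :
    ∀ β l μ, ∑ α, ∑ α', ginv α α' * DSsc g ginv H DH α α' β l μ = 0 := by
  intro β l μ
  -- termwise congruence helpers
  have cong2 : ∀ {f f' : ι → ι → ℝ}, (∀ a b, f a b = f' a b) →
      (∑ a, ∑ b, f a b) = ∑ a, ∑ b, f' a b := fun h =>
    Finset.sum_congr rfl fun a _ => Finset.sum_congr rfl fun b _ => h a b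
  have cong4 : ∀ {f f' : ι → ι → ι → ι → ℝ}, (∀ a b c d, f a b c d = f' a b c d) →
      (∑ a, ∑ b, ∑ c, ∑ d, f a b c d) = ∑ a, ∑ b, ∑ c, ∑ d, f' a b c d := fun h =>
    Finset.sum_congr rfl fun a _ => Finset.sum_congr rfl fun b _ =>
      Finset.sum_congr rfl fun c _ => Finset.sum_congr rfl fun d _ => h a b c d
  -- swap the middle two of four nested sums
  have comm_mid : ∀ f : ι → ι → ι → ι → ℝ,
      (∑ a, ∑ b, ∑ c, ∑ d, f a b c d) = ∑ a, ∑ c, ∑ b, ∑ d, f a b c d :=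
    fun f => Finset.sum_congr rfl fun a _ => Finset.sum_comm
  -- move the last two of four nested sums to the front
  have comm4 : ∀ f : ι → ι → ι → ι → ℝ,
      (∑ a, ∑ b, ∑ c, ∑ d, f a b c d) = ∑ c, ∑ d, ∑ a, ∑ b, f a b c d := by
    intro f
    trans ∑ a, ∑ c, ∑ d, ∑ b, f a b c d
    · refine Finset.sum_congr rfl fun a _ => ?_
      trans ∑ c, ∑ b, ∑ d, f a b c d
      · exact Finset.sum_comm
      · exact Finset.sum_congr rfl fun c _ => Finset.sum_comm
    · trans ∑ c, ∑ a, ∑ d, ∑ b, f a b c d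
      · exact Finset.sum_comm
      · exact Finset.sum_congr rfl fun c _ => Finset.sum_comm
  -- swap a symmetric double contraction
  have swap2 : ∀ f : ι → ι → ℝ,
      (∑ a, ∑ b, ginv a b * f a b) = ∑ a, ∑ b, ginv a b * f b a := by
    intro f
    trans ∑ b, ∑ a, ginv a b * f a b
    · exact Finset.sum_comm
    · exact Finset.sum_congr rfl fun b _ => Finset.sum_congr rfl fun a _ => by rw [hginv]
  -- contraction of ginv with g gives a delta
  have contract : ∀ F : ι → ℝ, (∑ a, ∑ b, ginv a b * (g b β * F a)) = F β := by
    intro F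
    have h1 : ∀ a, (∑ b, ginv a b * (g b β * F a)) = (if a = β then 1 else 0) * F a := by
      intro a
      rw [← hinv a β, Finset.sum_mul]
      exact Finset.sum_congr rfl fun b _ => by ring
    rw [Finset.sum_congr rfl fun a _ => h1 a]
    simp
  -- full symmetry of DH in outer indices
  have hDH13 : ∀ x y z, DH x y z = DH z y x := by
    intro x y z; rw [hDH1 x y z, hDH2 y x z, hDH1 y z x]
  -- trace of DH over its first two indices vanishes
  have lemA : ∀ c, (∑ a, ∑ b, ginv a b * DH a b c) = 0 := by
    intro c
    have hb : ∀ a b, ginv a b * DH a b c = ginv a b * DH c a b := by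
      intro a b; rw [hDH2 a b c, hDH1 a c b]
    rw [cong2 hb]; exact hwaveD c
  -- the quadruple contraction appearing below
  have hU1 : (∑ a, ∑ b, ∑ c, ∑ d, ginv a b * (g l μ * (ginv c d * (DH a b c * H β d)))) = 0 := by
    rw [comm4 fun a b c d => ginv a b * (g l μ * (ginv c d * (DH a b c * H β d)))]
    have hz : ∀ c d, (∑ a, ∑ b, ginv a b * (g l μ * (ginv c d * (DH a b c * H β d)))) = 0 := by
      intro c d
      have hb : ∀ a b, ginv a b * (g l μ * (ginv c d * (DH a b c * H β d)))
          = (g l μ * (ginv c d * H β d)) * (ginv a b * DH a b c) := fun a b => by ring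
      simp only [hb, ← Finset.mul_sum, lemA, mul_zero]
    simp only [hz, Finset.sum_const_zero]
  simp only [DSsc, mul_add, mul_sub, Finset.sum_add_distrib, Finset.sum_sub_distrib]
  have h1 : (∑ x : ι, ∑ x_1 : ι, ginv x x_1 * (DH x x_1 l * H μ β)) = 0 := by
    have hb : ∀ a b, ginv a b * (DH a b l * H μ β) = (ginv a b * DH a b l) * H μ β :=
      fun a b => by ring
    simp only [hb, ← Finset.sum_mul, lemA, zero_mul]
  have h3 : (∑ x : ι, ∑ x_1 : ι, ginv x x_1 * (DH x x_1 μ * H β l)) = 0 := by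
    have hb : ∀ a b, ginv a b * (DH a b μ * H β l) = (ginv a b * DH a b μ) * H β l :=
      fun a b => by ring
    simp only [hb, ← Finset.sum_mul, lemA, zero_mul]
  have h2 : (∑ x : ι, ∑ x_1 : ι, ginv x x_1 * (H x_1 l * DH x μ β))
      = ∑ x : ι, ∑ x_1 : ι, ginv x x_1 * (H l x * DH β μ x_1) := by
    rw [swap2 fun a b => H b l * DH a μ β]
    exact cong2 fun a b => by rw [hH a l, hDH13 b μ β]
  have h4 : (∑ x : ι, ∑ x_1 : ι, ginv x x_1 * (H x_1 μ * DH x β l))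
      = ∑ x : ι, ∑ x_1 : ι, ginv x x_1 * (DH β l x * H μ x_1) := by
    exact cong2 fun a b => by rw [hH b μ, hDH1 a β l, hDH2 β a l]; ring
  have h5a : (∑ x : ι, ∑ x_1 : ι, ginv x x_1 *
        (g x_1 β * ∑ x_2 : ι, ∑ x_3 : ι, ginv x_2 x_3 * (DH x l x_2 * H μ x_3)))
      = ∑ x : ι, ∑ x_1 : ι, ginv x x_1 * (DH β l x * H μ x_1) :=
    contract fun a => ∑ c, ∑ d, ginv c d * (DH a l c * H μ d)
  have h5b : (∑ x : ι, ∑ x_1 : ι, ginv x x_1 *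
        (g x_1 β * ∑ x_2 : ι, ∑ x_3 : ι, ginv x_2 x_3 * (H l x_2 * DH x μ x_3)))
      = ∑ x : ι, ∑ x_1 : ι, ginv x x_1 * (H l x * DH β μ x_1) :=
    contract fun a => ∑ c, ∑ d, ginv c d * (H l c * DH a μ d)
  have h6a : (∑ x : ι, ∑ x_1 : ι, ginv x x_1 *
        (g l μ * ∑ x_2 : ι, ∑ x_3 : ι, ginv x_2 x_3 * (DH x x_1 x_2 * H β x_3))) = 0 := by
    simp only [Finset.mul_sum]
    exact hU1
  -- the common quadruple sum U2
  have h6b : (∑ x : ι, ∑ x_1 : ι, ginv x x_1 *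
        (g l μ * ∑ x_2 : ι, ∑ x_3 : ι, ginv x_2 x_3 * (H x_1 x_2 * DH x β x_3)))
      = g l μ * ∑ a, ∑ b, ∑ c, ∑ d, ginv a b * (ginv c d * (H b c * DH a β d)) := by
    simp only [Finset.mul_sum]
    exact cong4 fun a b c d => by ring
  have h7a : (∑ x : ι, ∑ x_1 : ι, ginv x x_1 *
        (1 / 2 * g x_1 β * g l μ * ∑ x_2 : ι, ∑ x_3 : ι, ∑ x_4 : ι, ∑ x_5 : ι,
          ginv x_2 x_4 * ginv x_3 x_5 * (DH x x_2 x_3 * H x_4 x_5)))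
      = 1 / 2 * g l μ * ∑ a, ∑ b, ∑ c, ∑ d, ginv a b * (ginv c d * (H b c * DH a β d)) := by
    trans ∑ a, ∑ b, ginv a b * (g b β * (1 / 2 * g l μ * ∑ x_2 : ι, ∑ x_3 : ι, ∑ x_4 : ι, ∑ x_5 : ι,
          ginv x_2 x_4 * ginv x_3 x_5 * (DH a x_2 x_3 * H x_4 x_5)))
    · exact cong2 fun a b => by ring
    rw [contract fun a => 1 / 2 * g l μ * ∑ x_2 : ι, ∑ x_3 : ι, ∑ x_4 : ι, ∑ x_5 : ι,
          ginv x_2 x_4 * ginv x_3 x_5 * (DH a x_2 x_3 * H x_4 x_5)]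
    congr 1
    trans ∑ x_2 : ι, ∑ x_4 : ι, ∑ x_3 : ι, ∑ x_5 : ι,
        ginv x_2 x_4 * ginv x_3 x_5 * (DH β x_2 x_3 * H x_4 x_5)
    · exact comm_mid fun a c b d => ginv a b * ginv c d * (DH β a c * H b d)
    refine Finset.sum_congr rfl fun a _ => Finset.sum_congr rfl fun b _ => ?_
    -- swap the inner contraction pair
    trans ∑ c, ∑ d, ginv c d * (ginv a b * (DH β a c * H b d))
    · exact cong2 fun c d => by ring
    rw [swap2 fun c d => ginv a b * (DH β a c * H b d)]
    exact cong2 fun c d => by rw [hDH1 β a d]; ring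
  have h7b : (∑ x : ι, ∑ x_1 : ι, ginv x x_1 *
        (1 / 2 * g x_1 β * g l μ * ∑ x_2 : ι, ∑ x_3 : ι, ∑ x_4 : ι, ∑ x_5 : ι,
          ginv x_2 x_4 * ginv x_3 x_5 * (H x_2 x_3 * DH x x_4 x_5)))
      = 1 / 2 * g l μ * ∑ a, ∑ b, ∑ c, ∑ d, ginv a b * (ginv c d * (H b c * DH a β d)) := by
    trans ∑ a, ∑ b, ginv a b * (g b β * (1 / 2 * g l μ * ∑ x_2 : ι, ∑ x_3 : ι, ∑ x_4 : ι, ∑ x_5 : ι,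
          ginv x_2 x_4 * ginv x_3 x_5 * (H x_2 x_3 * DH a x_4 x_5)))
    · exact cong2 fun a b => by ring
    rw [contract fun a => 1 / 2 * g l μ * ∑ x_2 : ι, ∑ x_3 : ι, ∑ x_4 : ι, ∑ x_5 : ι,
          ginv x_2 x_4 * ginv x_3 x_5 * (H x_2 x_3 * DH a x_4 x_5)]
    congr 1
    trans ∑ x_2 : ι, ∑ x_4 : ι, ∑ x_3 : ι, ∑ x_5 : ι,
        ginv x_2 x_4 * ginv x_3 x_5 * (H x_2 x_3 * DH β x_4 x_5)
    · exact comm_mid fun a c b d => ginv a b * ginv c d * (H a c * DH β b d)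
    -- outer pair swap
    trans ∑ a, ∑ b, ginv a b * ∑ c, ∑ d, ginv c d * (H a c * DH β b d)
    · refine Finset.sum_congr rfl fun a _ => Finset.sum_congr rfl fun b _ => ?_
      rw [Finset.mul_sum]
      refine Finset.sum_congr rfl fun c _ => ?_
      rw [Finset.mul_sum]
      exact Finset.sum_congr rfl fun d _ => by ring
    rw [swap2 fun a b => ∑ c, ∑ d, ginv c d * (H a c * DH β b d)]
    refine Finset.sum_congr rfl fun a _ => Finset.sum_congr rfl fun b _ => ?_
    rw [Finset.mul_sum]
    refine Finset.sum_congr rfl fun c _ => ?_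
    rw [Finset.mul_sum]
    exact Finset.sum_congr rfl fun d _ => by rw [hDH1 β a d]
  rw [h1, h2, h3, h4, h5a, h5b, h6a, h6b, h7a, h7b]
  ring
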